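/- For all integers h, ℓ, q with 3 < h < ℓ−3 and q ≥ ℓh/4 + h + 1, Cops has a winning strategy in the q-round (h+1)-cops-and-robber game CR^{h+1}_q(G_{h×ℓ}) on the h×ℓ grid. -/

import Mathlib

set_option maxHeartbeats 1000000

/-! ## Bundled finite simple graphs and homomorphism counting -/

/-- A bundled finite simple graph (vertex set `Fin n`). -/
abbrev GraphB : Type := Σ n : ℕ, SimpleGraph (Fin n)

/-- The number of graph homomorphisms from `F` to `G`. -/
noncomputable def homCount {V W : Type*} (F : SimpleGraph V) (G : SimpleGraph W) : ℕ :=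
  Set.ncard {f : V → W | ∀ ⦃u v⦄, F.Adj u v → G.Adj (f u) (f v)}

/-- `G` and `H` are homomorphism indistinguishable over the class `𝓕`. -/
def HomIndist (𝓕 : Set GraphB) {V W : Type*} (G : SimpleGraph V) (H : SimpleGraph W) : Prop :=
  ∀ A ∈ 𝓕, homCount A.2 G = homCount A.2 H

/-- The homomorphism distinguishing closure of the class `𝓕`. -/
def hdCl (𝓕 : Set GraphB) : Set GraphB :=
  {A | ∀ G H : GraphB, HomIndist 𝓕 G.2 H.2 → homCount A.2 G.2 = homCount A.2 H.2}

/-! ## Pebble forest covers and the class `T^k_q` -/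

/-- A `k`-pebble forest cover of depth at most `q`.  The rooted forest is encoded by its
ancestor (partial) order `le`, in which the set of ancestors of any vertex is a chain. -/
structure PebbleForestCover {V : Type*} (G : SimpleGraph V) (k q : ℕ) where
  le : V → V → Prop
  le_refl : ∀ v, le v v
  le_antisymm : ∀ u v, le u v → le v u → u = v
  le_trans : ∀ u v w, le u v → le v w → le u w
  downChain : ∀ u v w, le u w → le v w → le u v ∨ le v u
  peb : V → Fin k
  cover : ∀ ⦃u v⦄, G.Adj u v → le u v ∨ le v u
  pebbleCond : ∀ ⦃u v w⦄, G.Adj u v → le u v → le u w → le w v → u ≠ w → peb u ≠ peb w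
  heightLE : ∀ v, Set.ncard {u | le u v} ≤ q

def HasPFC {V : Type*} (G : SimpleGraph V) (k q : ℕ) : Prop :=
  Nonempty (PebbleForestCover G k q)

/-- The class `T^k_q` of graphs admitting a `k`-pebble forest cover of depth at most `q`. -/
def Tclass (k q : ℕ) : Set GraphB := {G | HasPFC G.2 k q}

/-! ## Forest covers, treedepth, tree decompositions, treewidth -/

/-- `G` has a forest cover of height at most `q`, i.e. treedepth at most `q`. -/
def HasForestCover {V : Type*} (G : SimpleGraph V) (q : ℕ) : Prop :=
  ∃ le : V → V → Prop,
    (∀ v, le v v) ∧ (∀ u v, le u v → le v u → u = v) ∧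
    (∀ u v w, le u v → le v w → le u w) ∧
    (∀ u v w, le u w → le v w → le u v ∨ le v u) ∧
    (∀ ⦃u v⦄, G.Adj u v → le u v ∨ le v u) ∧
    (∀ v, Set.ncard {u | le u v} ≤ q)

/-- The class `TD_q` of graphs of treedepth at most `q`. -/
def TDclass (q : ℕ) : Set GraphB := {G | HasForestCover G.2 q}

/-- A tree decomposition of `G`. -/
structure TreeDecomp {V : Type*} (G : SimpleGraph V) where
  n : ℕ
  T : SimpleGraph (Fin n)
  isTree : T.IsTree
  bag : Fin n → Set V
  coversVerts : ∀ v : V, ∃ t, v ∈ bag t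
  coversEdges : ∀ ⦃u v⦄, G.Adj u v → ∃ t, u ∈ bag t ∧ v ∈ bag t
  bagsConnected : ∀ v : V, (SimpleGraph.induce {t | v ∈ bag t} T).Connected

/-- The decomposition has width at most `w`. -/
def TreeDecomp.widthLE {V : Type*} {G : SimpleGraph V} (d : TreeDecomp G) (w : ℕ) : Prop :=
  ∀ t, (d.bag t).ncard ≤ w + 1

/-- `t` lies on the (unique) path from `r` to `s` in the tree `d.T`,
i.e. `t` is an ancestor of `s` when `d.T` is rooted at `r`. -/
def TreeDecomp.anc {V : Type*} {G : SimpleGraph V} (d : TreeDecomp G) (r t s : Fin d.n) : Prop :=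
  ∀ w : d.T.Walk r s, t ∈ w.support

/-- The decomposition has depth at most `q`: for some root `r`, for every node `s`,
the union of the bags of ancestors of `s` has at most `q` vertices. -/
def TreeDecomp.depthLE {V : Type*} {G : SimpleGraph V} (d : TreeDecomp G) (q : ℕ) : Prop :=
  ∃ r : Fin d.n, ∀ s : Fin d.n, (⋃ t ∈ {t | d.anc r t s}, d.bag t).ncard ≤ q

/-- The class `TW_w` of graphs of treewidth at most `w`. -/
def TWclass (w : ℕ) : Set GraphB := {G | ∃ d : TreeDecomp G.2, d.widthLE w}

/-! ## Minors and disjoint unions -/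

/-- `H` is a minor of `G`: there are pairwise disjoint connected nonempty branch sets in `G`,
one for each vertex of `H`, such that edges of `H` are realised between branch sets. -/
def IsMinor {W V : Type*} (H : SimpleGraph W) (G : SimpleGraph V) : Prop :=
  ∃ φ : V → Option W,
    (∀ w : W, (SimpleGraph.induce {v | φ v = some w} G).Connected) ∧
    (∀ ⦃w₁ w₂⦄, H.Adj w₁ w₂ → ∃ v₁ v₂, φ v₁ = some w₁ ∧ φ v₂ = some w₂ ∧ G.Adj v₁ v₂)

/-- The disjoint union of two simple graphs. -/
def sumGraph {V W : Type*} (G : SimpleGraph V) (H : SimpleGraph W) : SimpleGraph (V ⊕ W) where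
  Adj x y :=
    match x, y with
    | Sum.inl a, Sum.inl b => G.Adj a b
    | Sum.inr a, Sum.inr b => H.Adj a b
    | _, _ => False
  symm := by
    constructor
    rintro (a | a) (b | b) h
    · exact G.adj_symm h
    · exact h.elim
    · exact h.elim
    · exact H.adj_symm h
  loopless := by
    constructor
    rintro (a | a) h
    · exact G.loopless.irrefl a h
    · exact H.loopless.irrefl a h

/-! ## Cops-and-robber games -/

/-- A robber move from `v` to `u`: a walk in `G` none of whose vertices lies in `A`
(`A` will be `X ∩ Y` for old/new cop positions `X`, `Y` on `G` plus a `k`-clique). -/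
def RobberMove {V : Type*} {k : ℕ} (G : SimpleGraph V) (A : Finset (V ⊕ Fin k)) (v u : V) :
    Prop :=
  ∃ w : G.Walk v u, ∀ x ∈ w.support, Sum.inl x ∉ A

/-- The initial cop position: all `k` cops on the auxiliary clique. -/
def initPos (V : Type*) [DecidableEq V] (k : ℕ) : Finset (V ⊕ Fin k) :=
  Finset.univ.image Sum.inr

/-- In the (non-monotone) cops-and-robber game on `G` with `k` cops, from cop position `X`
and robber position `v`, Cops can catch the robber within `q` further rounds. -/
def CopsCatch {V : Type*} [DecidableEq V] (G : SimpleGraph V) (k : ℕ) :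
    ℕ → Finset (V ⊕ Fin k) → V → Prop
  | 0, _, _ => False
  | q + 1, X, v =>
      ∃ Y : Finset (V ⊕ Fin k), Y.card = k ∧ (X ∩ Y).card = k - 1 ∧
        ∀ u : V, RobberMove G (X ∩ Y) v u → (Sum.inl u ∈ Y ∨ CopsCatch G k q Y u)

/-- Monotone variant: Cops may only move so that the robber escape space does not grow. -/
def MonCopsCatch {V : Type*} [DecidableEq V] (G : SimpleGraph V) (k : ℕ) :
    ℕ → Finset (V ⊕ Fin k) → V → Prop
  | 0, _, _ => False
  | q + 1, X, v =>
      ∃ Y : Finset (V ⊕ Fin k), Y.card = k ∧ (X ∩ Y).card = k - 1 ∧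
        (∀ u : V, RobberMove G (X ∩ Y) v u → RobberMove G X v u) ∧
        ∀ u : V, RobberMove G (X ∩ Y) v u → (Sum.inl u ∈ Y ∨ MonCopsCatch G k q Y u)

/-- Robber can evade capture for `q` further rounds from cop position `X`, robber at `v`. -/
def RobberEsc {V : Type*} [DecidableEq V] (G : SimpleGraph V) (k : ℕ) :
    ℕ → Finset (V ⊕ Fin k) → V → Prop
  | 0, _, _ => True
  | q + 1, X, v =>
      ∀ Y : Finset (V ⊕ Fin k), Y.card = k → (X ∩ Y).card = k - 1 →
        ∃ u : V, RobberMove G (X ∩ Y) v u ∧ Sum.inl u ∉ Y ∧ RobberEsc G k q Y u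

/-- Cops has a winning strategy in the `q`-round `k`-cops-and-robber game on `G`. -/
def CopsWinGame {V : Type*} [DecidableEq V] (G : SimpleGraph V) (k q : ℕ) : Prop :=
  ∀ v : V, CopsCatch G k q (initPos V k) v

/-- Cops has a winning strategy in the monotone `q`-round `k`-cops-and-robber game on `G`. -/
def MonCopsWinGame {V : Type*} [DecidableEq V] (G : SimpleGraph V) (k q : ℕ) : Prop :=
  ∀ v : V, MonCopsCatch G k q (initPos V k) v

/-- Robber has a winning strategy in the `q`-round `k`-cops-and-robber game on `G`. -/
def RobberWinsGame {V : Type*} [DecidableEq V] (G : SimpleGraph V) (k q : ℕ) : Prop :=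
  ∃ v : V, RobberEsc G k q (initPos V k) v

/-- The `h × ℓ` grid graph. -/
def gridGraph (h l : ℕ) : SimpleGraph (Fin h × Fin l) :=
  (SimpleGraph.pathGraph h).boxProd (SimpleGraph.pathGraph l)

/-! ## The CFI-like construction `G_U` -/

/-- Vertices of `G_U`: pairs `(v, S)` with `S` a set of edges incident to `v` whose
parity matches `|{v} ∩ U|`. -/
def CFIvert {V : Type*} (G : SimpleGraph V) (U : Set V) : Type _ :=
  {p : V × Set (Sym2 V) // p.2 ⊆ G.incidenceSet p.1 ∧ (Even p.2.ncard ↔ p.1 ∉ U)}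

/-- The CFI-like graph `G_U` of Roberson. -/
def CFI {V : Type*} (G : SimpleGraph V) (U : Set V) : SimpleGraph (CFIvert G U) where
  Adj x y := G.Adj x.1.1 y.1.1 ∧ s(x.1.1, y.1.1) ∉ symmDiff x.1.2 y.1.2
  symm := by
    constructor
    rintro x y ⟨h1, h2⟩
    refine ⟨h1.symm, ?_⟩
    rw [Sym2.eq_swap, symmDiff_comm]
    exact h2
  loopless := by
    constructor
    rintro x ⟨h1, _⟩
    exact G.loopless.irrefl _ h1

/-! ## Counting first-order logic -/

/-- Formulae of first-order counting logic `C` with variables indexed by `α`. -/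
inductive CForm (α : Type) : Type
  | eq : α → α → CForm α
  | adj : α → α → CForm α
  | not : CForm α → CForm α
  | or : CForm α → CForm α → CForm α
  | and : CForm α → CForm α → CForm α
  | count : ℕ → α → CForm α → CForm α

namespace CForm

variable {α : Type} [DecidableEq α]

/-- Quantifier rank. -/
def qr : CForm α → ℕ
  | eq _ _ => 0
  | adj _ _ => 0
  | not φ => qr φ
  | or φ ψ => max (qr φ) (qr ψ)
  | and φ ψ => max (qr φ) (qr ψ)
  | count _ _ φ => qr φ + 1

/-- Free variables. -/
def freeVars : CForm α → Finset α
  | eq i j => {i, j}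
  | adj i j => {i, j}
  | not φ => freeVars φ
  | or φ ψ => freeVars φ ∪ freeVars ψ
  | and φ ψ => freeVars φ ∪ freeVars ψ
  | count _ i φ => (freeVars φ).erase i

/-- Satisfaction in a simple graph, relative to a partial variable assignment. -/
def Sat {V : Type*} (G : SimpleGraph V) : CForm α → (α → Option V) → Prop
  | eq i j, a => ∃ v, a i = some v ∧ a j = some v
  | adj i j, a => ∃ v w, a i = some v ∧ a j = some w ∧ G.Adj v w
  | not φ, a => ¬ Sat G φ a
  | or φ ψ, a => Sat G φ a ∨ Sat G ψ a
  | and φ ψ, a => Sat G φ a ∧ Sat G ψ a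
  | count t i φ, a =>
      ∃ s : Finset V, t ≤ s.card ∧ ∀ v ∈ s, Sat G φ (fun j => if j = i then some v else a j)

/-- Guarded formulae: every quantifier occurs as `∃^{≥t} y (E x y ∧ ψ)` with `x ≠ y`. -/
def Guarded : CForm α → Prop
  | count _ y (and (adj x y') χ) => y' = y ∧ x ≠ y ∧ Guarded χ
  | count _ _ _ => False
  | eq _ _ => True
  | adj _ _ => True
  | not φ => Guarded φ
  | or φ ψ => Guarded φ ∧ Guarded ψ
  | and φ ψ => Guarded φ ∧ Guarded ψ

end CForm

/-! ## Labelled graphs, products, construction trees -/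

/-- A `k`-labelled finite graph. -/
structure LGraph (k : ℕ) : Type 1 where
  V : Type
  fin : Finite V
  G : SimpleGraph V
  ν : Fin k → Option V

namespace LGraph

variable {k : ℕ}

/-- Number of homomorphisms between `k`-labelled graphs. -/
noncomputable def lhomCount (F G : LGraph k) : ℕ :=
  Set.ncard {f : F.V → G.V |
    (∀ ⦃u v⦄, F.G.Adj u v → G.G.Adj (f u) (f v)) ∧
    ∀ i v, F.ν i = some v → ∃ w, G.ν i = some w ∧ f v = w}

/-- Remove label `i`. -/
def removeLabel (A : LGraph k) (i : Fin k) : LGraph k :=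
  { A with ν := fun j => if j = i then none else A.ν j }

/-- Every vertex carries at least one label. -/
def FullyLabelled (A : LGraph k) : Prop := ∀ v : A.V, ∃ i, A.ν i = some v

/-- Adjacency on the disjoint sum of two labelled graphs. -/
def sumAdj (A B : LGraph k) : A.V ⊕ B.V → A.V ⊕ B.V → Prop
  | Sum.inl u, Sum.inl v => A.G.Adj u v
  | Sum.inr u, Sum.inr v => B.G.Adj u v
  | _, _ => False

lemma sumAdj_symm (A B : LGraph k) : ∀ x y, sumAdj A B x y → sumAdj A B y x := by
  rintro (u | u) (v | v) h
  · exact A.G.adj_symm h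
  · exact h.elim
  · exact h.elim
  · exact B.G.adj_symm h

/-- The gluing relation: vertices carrying the same label get identified. -/
def glue (A B : LGraph k) : A.V ⊕ B.V → A.V ⊕ B.V → Prop := fun x y =>
  ∃ i : Fin k, (A.ν i).map Sum.inl = some x ∧ (B.ν i).map Sum.inr = some y

/-- The product of two `k`-labelled graphs: disjoint union, identify equally labelled
vertices, suppress loops and parallel edges. -/
def product (A B : LGraph k) : LGraph k where
  V := Quot (glue A B)
  fin := by
    haveI := A.fin
    haveI := B.fin
    exact Finite.of_surjective (Quot.mk _) (fun x => Quot.inductionOn x fun a => ⟨a, rfl⟩)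
  G :=
    { Adj := fun x y =>
        x ≠ y ∧ ∃ u v, Quot.mk _ u = x ∧ Quot.mk _ v = y ∧ sumAdj A B u v
      symm := by
        constructor
        rintro x y ⟨hne, u, v, hu, hv, h⟩
        exact ⟨hne.symm, v, u, hv, hu, sumAdj_symm A B u v h⟩
      loopless := ⟨fun x h => h.1 rfl⟩ }
  ν := fun i =>
    ((A.ν i).map fun v => Quot.mk _ (Sum.inl v)).orElse
      fun _ => (B.ν i).map fun v => Quot.mk _ (Sum.inr v)

/-- Isomorphism of labelled graphs. -/
def LIso (A B : LGraph k) : Prop :=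
  ∃ e : A.G ≃g B.G, ∀ i, (A.ν i).map (fun v => e v) = B.ν i

end LGraph

/-- `k`-construction trees: leaves carry (fully labelled) graphs, unary nodes remove
one label, binary nodes take products. -/
inductive CT (k : ℕ) : Type 1
  | leaf : LGraph k → CT k
  | elim : Fin k → CT k → CT k
  | prod : CT k → CT k → CT k

namespace CT

variable {k : ℕ}

/-- The labelled graph constructed by a construction tree. -/
def graphOf : CT k → LGraph k
  | leaf A => A
  | elim i t => (graphOf t).removeLabel i
  | prod t₁ t₂ => (graphOf t₁).product (graphOf t₂)

/-- Validity: leaves are fully labelled and elimination nodes remove an assigned label. -/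
def Valid : CT k → Prop
  | leaf A => A.FullyLabelled
  | elim i t => Valid t ∧ (graphOf t).ν i ≠ none
  | prod t₁ t₂ => Valid t₁ ∧ Valid t₂

/-- Guarded validity: labels may only be removed from vertices with a labelled neighbour. -/
def GuardedValid : CT k → Prop
  | leaf A => A.FullyLabelled
  | elim i t => GuardedValid t ∧
      ∃ v, (graphOf t).ν i = some v ∧
        ∃ j w, (graphOf t).ν j = some w ∧ (graphOf t).G.Adj v w
  | prod t₁ t₂ => GuardedValid t₁ ∧ GuardedValid t₂

/-- The elimination depth: maximal number of elimination nodes on a root-to-leaf path. -/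
def elimDepth : CT k → ℕ
  | leaf _ => 0
  | elim _ t => elimDepth t + 1
  | prod t₁ t₂ => max (elimDepth t₁) (elimDepth t₂)

end CT

/-- The class `L^k_q` of `k`-labelled graphs admitting a `k`-construction tree of
elimination depth at most `q`. -/
def Lclass (k q : ℕ) : Set (LGraph k) :=
  {F | ∃ t : CT k, CT.Valid t ∧ CT.elimDepth t ≤ q ∧ LGraph.LIso (CT.graphOf t) F}

/-- The class `GL^k_q`: as `L^k_q`, but labels may only be removed from vertices with a
labelled neighbour. -/
def GLclass (k q : ℕ) : Set (LGraph k) :=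
  {F | ∃ t : CT k, CT.GuardedValid t ∧ CT.elimDepth t ≤ q ∧ LGraph.LIso (CT.graphOf t) F}

/-- The class `GE^k_q` of unlabelled graphs underlying graphs in `GL^k_q`. -/
def GEclass (k q : ℕ) : Set GraphB :=
  {G | ∃ F ∈ GLclass k q, Nonempty (F.G ≃g G.2)}

/-! ## The bijective pebble game -/

/-- `γ` is a partial isomorphism between `G` and `H`. -/
def PartialIso {V W : Type*} (G : SimpleGraph V) (H : SimpleGraph W) {k : ℕ}
    (γ : Fin k → Option (V × W)) : Prop :=
  ∀ i j vi wi vj wj, γ i = some (vi, wi) → γ j = some (vj, wj) →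
    ((vi = vj ↔ wi = wj) ∧ (G.Adj vi vj ↔ H.Adj wi wj))

/-- Duplicator wins the `q`-round bijective `k`-pebble game on `G` and `H` from position `γ`. -/
def DupWins {V W : Type*} (G : SimpleGraph V) (H : SimpleGraph W) (k : ℕ) :
    ℕ → (Fin k → Option (V × W)) → Prop
  | 0, γ => PartialIso G H γ
  | q + 1, γ => PartialIso G H γ ∧
      ∀ p : Fin k, ∃ f : V ≃ W, ∀ v : V,
        DupWins G H k q (fun j => if j = p then some (v, f v) else γ j)

namespace CWG
variable {h l : ℕ}
variable {h l : ℕ}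

lemma grid_adj {a b : Fin h × Fin l} : (gridGraph h l).Adj a b ↔
    ((a.1 : ℕ) = b.1 ∧ ((a.2 : ℕ) + 1 = b.2 ∨ (b.2 : ℕ) + 1 = a.2)) ∨
    ((a.2 : ℕ) = b.2 ∧ ((a.1 : ℕ) + 1 = b.1 ∨ (b.1 : ℕ) + 1 = a.1)) := by
  simp only [gridGraph, SimpleGraph.boxProd_adj, SimpleGraph.pathGraph_adj, Fin.ext_iff]
  tauto

/-- side preservation along a walk avoiding the graph of `g`. -/
lemma walk_side {g : ℕ → ℕ}
    (hstep : ∀ r, r + 1 < h → g (r+1) = g r + 1 ∨ g r = g (r+1) + 1)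
    {v u : Fin h × Fin l} (w : (gridGraph h l).Walk v u)
    (hw : ∀ x ∈ w.support, (x.2 : ℕ) ≠ g x.1) :
    (g v.1 < (v.2 : ℕ) ↔ g u.1 < (u.2 : ℕ)) := by
  induction w with
  | nil => rfl
  | @cons a b c hadj p ih =>
    have ha : (a.2 : ℕ) ≠ g a.1 := hw a (by simp)
    have hb : (b.2 : ℕ) ≠ g b.1 := hw b (by simp)
    have hrest : ∀ x ∈ p.support, (x.2 : ℕ) ≠ g x.1 := fun x hx => hw x (by simp [hx])
    have hab : (g a.1 < (a.2 : ℕ) ↔ g b.1 < (b.2 : ℕ)) := by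
      rcases grid_adj.1 hadj with ⟨h1, h2⟩ | ⟨h1, h2⟩
      · have hg : g (a.1 : ℕ) = g (b.1 : ℕ) := by rw [h1]
        omega
      · rcases h2 with h2 | h2
        · have := hstep a.1 (by omega)
          rw [h2] at this; omega
        · have := hstep b.1 (by omega)
          rw [h2] at this; omega
    exact hab.trans (ih hrest)

lemma walk_stuck {k : ℕ} {A : Finset ((Fin h × Fin l) ⊕ Fin k)} {v u : Fin h × Fin l}
    (w : (gridGraph h l).Walk v u)
    (hw : ∀ x ∈ w.support, Sum.inl x ∉ A)
    (hnb : ∀ x, (gridGraph h l).Adj v x → Sum.inl x ∈ A) : u = v := by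
  cases w with
  | nil => rfl
  | cons hadj p =>
    exact absurd (hnb _ hadj) (by intro hc; exact hw _ (by simp) hc)

variable {h l : ℕ}

/-- the barrier finset: graph of `g`. -/
def barF (h l k : ℕ) (g : ℕ → ℕ) : Finset ((Fin h × Fin l) ⊕ Fin k) :=
  (Finset.univ.filter fun p : Fin h × Fin l => (p.2 : ℕ) = g p.1).image Sum.inl

lemma mem_barF {k : ℕ} {g : ℕ → ℕ} {x : (Fin h × Fin l) ⊕ Fin k} :
    x ∈ barF h l k g ↔ ∃ p : Fin h × Fin l, x = Sum.inl p ∧ (p.2 : ℕ) = g p.1 := by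
  simp only [barF, Finset.mem_image, Finset.mem_filter, Finset.mem_univ, true_and]
  constructor
  · rintro ⟨p, hp, rfl⟩; exact ⟨p, rfl, hp⟩
  · rintro ⟨p, rfl, hp⟩; exact ⟨p, hp, rfl⟩

lemma inl_mem_barF {k : ℕ} {g : ℕ → ℕ} {p : Fin h × Fin l} :
    (Sum.inl p : (Fin h × Fin l) ⊕ Fin k) ∈ barF h l k g ↔ (p.2 : ℕ) = g p.1 := by
  rw [mem_barF]
  constructor
  · rintro ⟨q, hq, h2⟩; cases Sum.inl_injective hq; exact h2
  · exact fun hp => ⟨p, rfl, hp⟩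

lemma inr_not_mem_barF {k : ℕ} {g : ℕ → ℕ} {j : Fin k} :
    (Sum.inr j : (Fin h × Fin l) ⊕ Fin k) ∉ barF h l k g := by
  rw [mem_barF]; rintro ⟨p, hp, -⟩; cases hp

lemma barF_congr {k : ℕ} {g g' : ℕ → ℕ} (hgg : ∀ r, r < h → g r = g' r) :
    barF h l k g = barF h l k g' := by
  unfold barF
  congr 1
  apply Finset.filter_congr
  intro p _
  simp [hgg p.1 p.1.isLt]

lemma barF_card {k : ℕ} {g : ℕ → ℕ} (hg : ∀ r, r < h → g r < l) :
    (barF h l k g).card = h := by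
  rw [barF, Finset.card_image_of_injective _ Sum.inl_injective]
  have : (Finset.univ.filter fun p : Fin h × Fin l => (p.2 : ℕ) = g p.1).card
      = (Finset.univ : Finset (Fin h)).card := by
    apply Finset.card_bij (fun (p : Fin h × Fin l) _ => p.1)
    · intros; exact Finset.mem_univ _
    · rintro ⟨a1, a2⟩ ha ⟨b1, b2⟩ hb hab
      simp only [Finset.mem_filter] at ha hb
      simp only at hab
      subst hab
      have : a2 = b2 := by
        apply Fin.ext
        rw [ha.2, hb.2]
      rw [this]
    · intro r _
      exact ⟨(r, ⟨g r, hg r r.isLt⟩), Finset.mem_filter.2 ⟨Finset.mem_univ _, rfl⟩, rfl⟩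
  rw [this, Finset.card_univ, Fintype.card_fin]

/-- a single cop move. -/
lemma move_spec {α : Type*} [DecidableEq α] {X : Finset α} {a b : α}
    (ha : a ∈ X) (hb : b ∉ X) :
    (insert b (X.erase a)).card = X.card ∧ X ∩ insert b (X.erase a) = X.erase a := by
  constructor
  · rw [Finset.card_insert_of_notMem (fun hc => hb (Finset.mem_of_mem_erase hc)),
      Finset.card_erase_of_mem ha]
    have := Finset.card_pos.2 ⟨a, ha⟩
    omega
  · ext x
    simp only [Finset.mem_inter, Finset.mem_insert, Finset.mem_erase]
    constructor
    · rintro ⟨hx, rfl | hx2⟩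
      · exact absurd hx hb
      · exact hx2
    · rintro ⟨hne, hx⟩; exact ⟨hx, Or.inr ⟨hne, hx⟩⟩


def gf (m P i : ℕ) : ℕ → ℕ := fun r =>
  if r % 2 = P then (if r < P + 2*i then m+2 else m) else m+1

def cnt (h P : ℕ) : ℕ := (h - P + 1) / 2

def Wr (h : ℕ) : ℕ → ℕ → ℕ
  | 0, _ => 0
  | N+1, P => cnt h P + Wr h N (1 - P)

lemma gf_ge {m P i r : ℕ} : m ≤ gf m P i r := by unfold gf; split_ifs <;> omega

lemma gf_le {m P i r : ℕ} : gf m P i r ≤ m + 2 := by unfold gf; split_ifs <;> omega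

lemma gf_step {m P i : ℕ} (hP : P ≤ 1) (r : ℕ) :
    gf m P i (r+1) = gf m P i r + 1 ∨ gf m P i r = gf m P i (r+1) + 1 := by
  unfold gf; split_ifs <;> omega

lemma gf_r0 {m P i : ℕ} (hP : P ≤ 1) : gf m P i (P + 2*i) = m := by
  unfold gf; split_ifs <;> omega

lemma gf_update {m P i : ℕ} (hP : P ≤ 1) (r : ℕ) :
    gf m P (i+1) r = if r = P + 2*i then m+2 else gf m P i r := by
  unfold gf; split_ifs <;> omega

lemma gf_nbr {m P i r : ℕ} (hP : P ≤ 1) (hr : ¬ r % 2 = P) : gf m P i r = m + 1 := by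
  unfold gf; split_ifs <;> omega

lemma gf_roll {h m P : ℕ} (hP : P ≤ 1) (r : ℕ) (hr : r < h) :
    gf m P (cnt h P) r = gf (m+1) (1-P) 0 r := by
  unfold gf cnt; split_ifs <;> omega

lemma cnt_pos {h P : ℕ} (hP : P ≤ 1) (hh : 2 ≤ h) : 0 < cnt h P := by
  unfold cnt; omega

lemma Wr_ge_cnt {h N P : ℕ} (hN : 1 ≤ N) : cnt h P ≤ Wr h N P := by
  cases N with
  | zero => omega
  | succ n => show cnt h P ≤ cnt h P + _ ; omega

lemma Wr_bound {h : ℕ} (hh : 1 ≤ h) : ∀ N P, P ≤ 1 → 2 * Wr h N P ≤ N * h + 1 := by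
  intro N
  induction N using Nat.strong_induction_on with
  | _ N ih =>
    match N with
    | 0 => intro P _; simp [Wr]
    | 1 => intro P hP; simp only [Wr]; unfold cnt; omega
    | (N+2) =>
      intro P hP
      have h1 : Wr h (N+2) P = cnt h P + (cnt h (1-P) + Wr h N P) := by
        show Wr h (N+2) P = _
        rw [show Wr h (N+2) P = cnt h P + Wr h (N+1) (1-P) from rfl,
          show Wr h (N+1) (1-P) = cnt h (1-P) + Wr h N (1-(1-P)) from rfl]
        have hpp : 1-(1-P) = P := by omega
        rw [hpp]
      have h2 := ih N (by omega) P hP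
      have h3 : cnt h P + cnt h (1-P) = h := by unfold cnt; omega
      rw [h1]
      have : (N+2) * h = N * h + 2 * h := by ring
      omega

end CWG

namespace CWG

lemma gf_le0 {m P r : ℕ} (hP : P ≤ 1) : gf m P 0 r ≤ m + 1 := by
  unfold gf; split_ifs <;> omega

lemma cellext {h l : ℕ} {a b : Fin h × Fin l} (h1 : (a.1 : ℕ) = b.1) (h2 : (a.2 : ℕ) = b.2) :
    a = b := by
  rw [Prod.ext_iff, Fin.ext_iff, Fin.ext_iff]; exact ⟨h1, h2⟩

lemma inter_insert_insert {α : Type*} [DecidableEq α] {s : Finset α} {a b : α}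
    (ha : a ∉ s) (hb : b ∉ s) (hab : a ≠ b) : insert a s ∩ insert b s = s := by
  ext x
  simp only [Finset.mem_inter, Finset.mem_insert]
  constructor
  · rintro ⟨rfl | hx, h2⟩
    · rcases h2 with h2 | h2
      · exact absurd h2 hab
      · exact absurd h2 ha
    · exact hx
  · intro hx; exact ⟨Or.inr hx, Or.inr hx⟩

variable {h l : ℕ}

lemma sweep (hh : 4 ≤ h) :
    ∀ q m P i, P ≤ 1 →
    ((i = 0 ∧ m + 2 = l) ∨ (i < cnt h P ∧ m + 3 ≤ l)) →
    Wr h (l - 2 - m) P - i + 1 ≤ q →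
    ∀ e : (Fin h × Fin l) ⊕ Fin (h+1),
      (∀ p : Fin h × Fin l, e = Sum.inl p → (p.2 : ℕ) < gf m P i p.1) →
      ∀ v : Fin h × Fin l, gf m P i v.1 < (v.2 : ℕ) →
      CopsCatch (gridGraph h l) (h+1) q (insert e (barF h l (h+1) (gf m P i))) v := by
  intro q
  induction q with
  | zero => intro m P i _ _ hbud; omega
  | succ q IH =>
    intro m P i hP hterm hbud e he v hv
    have hml : m + 2 ≤ l := by rcases hterm with ⟨-, h'⟩ | ⟨-, h'⟩ <;> omega
    set g := gf m P i with hg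
    have heB : e ∉ barF h l (h+1) g := by
      intro hc
      rcases mem_barF.1 hc with ⟨p, rfl, hp⟩
      have := he p rfl
      omega
    have hvB : ∀ u : Fin h × Fin l, g u.1 < (u.2 : ℕ) → Sum.inl u ∉ barF h l (h+1) g := by
      intro u hu hc
      rw [inl_mem_barF] at hc
      omega
    have hve : ∀ u : Fin h × Fin l, g u.1 < (u.2 : ℕ) → Sum.inl u ≠ e := by
      intro u hu hc
      have := he u hc.symm
      omega
    set B := barF h l (h+1) g with hB
    set X := insert e B with hX
    have hcardB : B.card = h := by
      apply barF_card
      intro r hr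
      have : g r ≤ m + 2 := gf_le
      rcases hterm with ⟨hi0, hm2⟩ | ⟨-, hm3⟩
      · have : g r ≤ m + 1 := by rw [hg, hi0]; exact gf_le0 hP
        omega
      · omega
    rcases hterm with ⟨hi0, hm2⟩ | ⟨hicnt, hm3⟩
    · -- terminal: catch the robber directly
      subst hi0
      have hvle : (v.2 : ℕ) ≤ m + 1 := by have := v.2.isLt; omega
      have hgv : g v.1 = m ∧ (v.1 : ℕ) % 2 = P := by
        by_cases hpar : (v.1 : ℕ) % 2 = P
        · refine ⟨?_, hpar⟩
          have h1 : g v.1 ≤ m + 1 := gf_le0 hP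
          have h2 : m ≤ g v.1 := gf_ge
          omega
        · have := gf_nbr (m := m) (i := 0) hP hpar
          rw [← hg] at this
          omega
      have hv2 : (v.2 : ℕ) = m + 1 := by have := hgv.1; omega
      set Y := insert (Sum.inl v) B with hY
      have hvBm : Sum.inl v ∉ B := hvB v hv
      have hXY : X ∩ Y = B := inter_insert_insert heB hvBm fun hc => hve v hv hc.symm
      rw [CopsCatch]
      refine ⟨Y, ?_, ?_, ?_⟩
      · rw [hY, Finset.card_insert_of_notMem hvBm, hcardB]
      · rw [hXY, hcardB]; omega
      · intro u hmv
        rw [hXY] at hmv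
        obtain ⟨w, hw⟩ := hmv
        left
        have hnb : ∀ x, (gridGraph h l).Adj v x → Sum.inl x ∈ B := by
          intro x hadj
          rcases grid_adj.1 hadj with ⟨h1, h2⟩ | ⟨h1, h2⟩
          · rcases h2 with h2 | h2
            · exfalso; have := x.2.isLt; omega
            · rw [hB, inl_mem_barF, ← h1]
              omega
          · have hxpar : ¬ (x.1 : ℕ) % 2 = P := by
              have := hgv.2; omega
            have := gf_nbr (m := m) (i := 0) hP hxpar
            rw [← hg] at this
            rw [hB, inl_mem_barF, this]
            omega
        have := walk_stuck w (A := B) hw hnb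
        subst this
        exact Finset.mem_insert_self _ _
    · -- advance step
      have hN1 : 1 ≤ l - 2 - m := by omega
      have hWge : i + 1 ≤ Wr h (l - 2 - m) P := by
        have := Wr_ge_cnt (h := h) (P := P) hN1
        omega
      set r0 := P + 2*i with hr0
      have hr0h : r0 < h := by
        have : i + 1 ≤ (h - P + 1) / 2 := hicnt
        omega
      have hgr0 : g r0 = m := by rw [hg]; exact gf_r0 hP
      set bcell : Fin h × Fin l := (⟨r0, hr0h⟩, ⟨m+2, by omega⟩) with hbcell
      set b : (Fin h × Fin l) ⊕ Fin (h+1) := Sum.inl bcell with hbdef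
      have hbB : b ∉ B := by
        rw [hbdef, hB, inl_mem_barF]
        simp only [hbcell]
        omega
      have hbe : e ≠ b := by
        intro hc
        have := he bcell hc
        simp only [hbcell] at this
        have : (m + 2 : ℕ) < g r0 := this
        omega
      set Y := insert b B with hY
      have hXY : X ∩ Y = B := inter_insert_insert heB hbB hbe
      set g' := gf m P (i+1) with hg'
      set ecell : Fin h × Fin l := (⟨r0, hr0h⟩, ⟨m, by omega⟩) with hecell
      have hg'r : ∀ r : ℕ, g' r = if r = r0 then m + 2 else g r := fun r => gf_update hP r
      have hg'le : ∀ r : ℕ, g' r ≤ m + 2 := fun r => gf_le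
      have hB' : barF h l (h+1) g' = insert b (B.erase (Sum.inl ecell)) := by
        ext x
        rw [mem_barF]
        constructor
        · rintro ⟨p, rfl, hp⟩
          rw [hg'r] at hp
          rw [Finset.mem_insert]
          by_cases hpr : (p.1 : ℕ) = r0
          · rw [if_pos hpr] at hp
            left
            rw [hbdef]
            congr 1
            exact cellext (by simp [hbcell, hpr]) (by simp [hbcell, hp])
          · rw [if_neg hpr] at hp
            right
            rw [Finset.mem_erase]
            constructor
            · intro hc
              cases Sum.inl_injective hc
              simp [hecell] at hpr
            · rw [hB, inl_mem_barF]; exact hp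
        · intro hx
          rcases Finset.mem_insert.1 hx with rfl | hx
          · exact ⟨bcell, rfl, by simp [hbcell, hg'r]⟩
          · rw [Finset.mem_erase, hB, mem_barF] at hx
            obtain ⟨hne, p, rfl, hp⟩ := hx
            refine ⟨p, rfl, ?_⟩
            rw [hg'r]
            rw [if_neg ?_]
            · exact hp
            · intro hc
              apply hne
              congr 1
              exact cellext (by simp [hecell, hc])
                (by simp only [hecell]; rw [hp, hc, hgr0])
      have heB2 : Sum.inl ecell ∈ B := by
        rw [hB, inl_mem_barF]
        simp [hecell, hgr0]
      have hYe' : Y = insert (Sum.inl ecell) (barF h l (h+1) g') := by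
        rw [hB', hY, Finset.insert_comm, Finset.insert_erase heB2]
      rw [CopsCatch]
      refine ⟨Y, ?_, ?_, ?_⟩
      · rw [hY, Finset.card_insert_of_notMem hbB, hcardB]
      · rw [hXY, hcardB]; omega
      · intro u hmv
        rw [hXY] at hmv
        obtain ⟨w, hw⟩ := hmv
        have hw' : ∀ x ∈ w.support, (x.2 : ℕ) ≠ g x.1 := by
          intro x hx hc
          exact hw x hx (by rw [hB, inl_mem_barF]; exact hc)
        have huside : g u.1 < (u.2 : ℕ) :=
          (walk_side (fun r _ => gf_step hP r) w hw').1 hv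
        by_cases huY : Sum.inl u ∈ Y
        · exact Or.inl huY
        right
        set wcell : Fin h × Fin l := (⟨r0, hr0h⟩, ⟨m+1, by omega⟩) with hwcell
        by_cases hpark : u = wcell
        · -- parked robber: catch next move
          obtain ⟨q', hq'⟩ : ∃ q', q = q' + 1 := ⟨q - 1, by omega⟩
          rw [hq', hpark]
          set r'' := if r0 < 2 then r0 + 2 else r0 - 2 with hr''
          have hr''h : r'' < h := by rw [hr'']; split_ifs <;> omega
          have hr''ne : r'' + 2 = r0 ∨ r0 + 2 = r'' := by rw [hr'']; split_ifs <;> omega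
          set zcell : Fin h × Fin l := (⟨r'', hr''h⟩, ⟨g' r'', by have := hg'le r''; omega⟩)
            with hzcell
          set z : (Fin h × Fin l) ⊕ Fin (h+1) := Sum.inl zcell with hzdef
          have hzY : z ∈ Y := by
            rw [hYe']
            apply Finset.mem_insert_of_mem
            rw [inl_mem_barF]
          have hwY : Sum.inl wcell ∉ Y := by
            rw [hYe', Finset.mem_insert]
            rintro (hc | hc)
            · have h2 := Sum.inl_injective hc
              have h3 : (wcell.2 : ℕ) = (ecell.2 : ℕ) := by rw [h2]
              simp only [hwcell, hecell] at h3
              omega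
            · rw [inl_mem_barF] at hc
              simp only [hwcell] at hc
              have : g' r0 = m + 2 := by rw [hg'r]; simp
              omega
          obtain ⟨hcY2, hYY2⟩ := move_spec hzY hwY
          set Y₂ := insert (Sum.inl wcell) (Y.erase z) with hY₂
          rw [CopsCatch]
          refine ⟨Y₂, ?_, ?_, ?_⟩
          · rw [hcY2, hY, Finset.card_insert_of_notMem hbB, hcardB]
          · rw [hYY2, Finset.card_erase_of_mem hzY, hY,
              Finset.card_insert_of_notMem hbB, hcardB]
          · intro u' hmv'
            left
            rw [hYY2] at hmv'
            obtain ⟨w2, hw2⟩ := hmv'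
            have hnb : ∀ x, (gridGraph h l).Adj wcell x → Sum.inl x ∈ Y.erase z := by
              intro x hadj
              have hxz : (Sum.inl x : (Fin h × Fin l) ⊕ Fin (h+1)) ≠ z := by
                rw [hzdef]
                intro hc
                cases Sum.inl_injective hc
                rcases grid_adj.1 hadj with ⟨h1, -⟩ | ⟨-, h1⟩ <;>
                  simp only [hwcell, hzcell] at h1 <;> omega
              rw [Finset.mem_erase]
              refine ⟨hxz, ?_⟩
              rw [hYe', Finset.mem_insert]
              rcases grid_adj.1 hadj with ⟨h1, h2⟩ | ⟨h1, h2⟩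
              · -- same row r0, columns m or m+2
                simp only [hwcell] at h1 h2
                rcases h2 with h2 | h2
                · -- x.2 = m+2 : x = bcell
                  right
                  rw [inl_mem_barF]
                  have : g' x.1 = m + 2 := by rw [hg'r, ← h1]; simp
                  omega
                · -- x.2 = m : x = ecell
                  left
                  congr 1
                  exact cellext (by simp [hecell]; omega) (by simp [hecell]; omega)
              · -- same column m+1, rows r0 ± 1
                right
                rw [inl_mem_barF]
                simp only [hwcell] at h1 h2
                have hxpar : ¬ (x.1 : ℕ) % 2 = P := by omega
                have h3 : g' x.1 = m + 1 := gf_nbr hP hxpar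
                omega
            have := walk_stuck w2 (A := Y.erase z) hw2 hnb
            subst this
            exact Finset.mem_insert_self _ _
        · -- robber did not park: continue sweeping
          have huside' : g' u.1 < (u.2 : ℕ) := by
            rw [hg'r]
            by_cases hur : (u.1 : ℕ) = r0
            · rw [if_pos hur]
              have h1 : (u.2 : ℕ) ≠ m + 1 := by
                intro hc
                exact hpark (cellext (by simp [hwcell, hur]) (by simp [hwcell, hc]))
              have h2 : (u.2 : ℕ) ≠ m + 2 := by
                intro hc
                apply huY
                rw [hY, Finset.mem_insert]
                left
                rw [hbdef]
                congr 1
                exact cellext (by simp [hbcell, hur]) (by simp [hbcell, hc])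
              rw [← hur] at hgr0
              omega
            · rw [if_neg hur]; exact huside
          have he' : ∀ p : Fin h × Fin l, (Sum.inl ecell : (Fin h × Fin l) ⊕ Fin (h+1))
              = Sum.inl p → (p.2 : ℕ) < g' p.1 := by
            rintro p hp
            cases Sum.inl_injective hp
            simp only [hecell, hg'r]
            simp
          by_cases hroll : i + 1 = cnt h P
          · have hWrec : Wr h (l - 2 - m) P = cnt h P + Wr h (l - 2 - (m+1)) (1 - P) := by
              have h1 : l - 2 - m = (l - 2 - (m+1)) + 1 := by omega
              rw [h1]
              rfl
            have hrollg : ∀ r, r < h → gf m P (i+1) r = gf (m+1) (1-P) 0 r := by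
              intro r hr
              rw [hroll]
              exact gf_roll hP r hr
            have hbar2 : barF h l (h+1) (gf m P (i+1)) = barF h l (h+1) (gf (m+1) (1-P) 0) :=
              barF_congr hrollg
            have := IH (m+1) (1-P) 0 (by omega)
              (by
                by_cases hc : m + 3 = l
                · left; exact ⟨rfl, by omega⟩
                · right
                  exact ⟨cnt_pos (by omega) (by omega), by omega⟩)
              (by omega)
              (Sum.inl ecell)
              (by
                rintro p hp
                cases Sum.inl_injective hp
                have := he' ecell rfl
                rw [← hrollg r0 hr0h]
                simpa using this)
              u
              (by rw [← hrollg u.1 u.1.isLt]; exact huside')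
            rw [← hbar2, ← hYe'] at this
            exact this
          · have := IH m P (i+1) hP (Or.inr ⟨by omega, hm3⟩) (by omega)
              (Sum.inl ecell) he' u huside'
            rw [← hYe'] at this
            exact this

end CWG

namespace CWG

lemma catch_map {V V' : Type*} [DecidableEq V] [DecidableEq V'] [Fintype V] [Fintype V']
    {G : SimpleGraph V} {G' : SimpleGraph V'} (φ : G ≃g G') {k : ℕ} :
    ∀ q (X : Finset (V ⊕ Fin k)) (v : V), CopsCatch G k q X v →
      CopsCatch G' k q (X.map (Equiv.sumCongr φ.toEquiv (Equiv.refl (Fin k))).toEmbedding) (φ v) := by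
  intro q
  set τ := (Equiv.sumCongr φ.toEquiv (Equiv.refl (Fin k))).toEmbedding with hτ
  induction q with
  | zero => intro X v hc; exact hc.elim
  | succ q IH =>
    intro X v hc
    rw [CopsCatch] at hc ⊢
    obtain ⟨Y, hc1, hc2, hc3⟩ := hc
    refine ⟨Y.map τ, by rw [Finset.card_map]; exact hc1, ?_, ?_⟩
    · rw [← Finset.map_inter, Finset.card_map]; exact hc2
    · intro u' hmv'
      obtain ⟨w', hw'⟩ := hmv'
      have hmv : RobberMove G (X ∩ Y) v (φ.symm u') := by
        refine ⟨(w'.map φ.symm.toHom).copy (by simp) rfl, ?_⟩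
        intro x hx
        rw [SimpleGraph.Walk.support_copy, SimpleGraph.Walk.support_map] at hx
        obtain ⟨y, hy, rfl⟩ := List.mem_map.1 hx
        intro hmem
        apply hw' y hy
        rw [← Finset.map_inter]
        have h5 : τ (Sum.inl (φ.symm.toHom y)) ∈ (X ∩ Y).map τ := Finset.mem_map_of_mem _ hmem
        have h6 : τ (Sum.inl (φ.symm.toHom y)) = Sum.inl y := by simp [hτ]
        rwa [h6] at h5
      rcases hc3 _ hmv with hY | hcatch
      · left
        have h5 : τ (Sum.inl (φ.symm u')) ∈ Y.map τ := Finset.mem_map_of_mem _ hY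
        have h6 : τ (Sum.inl (φ.symm u')) = Sum.inl u' := by simp [hτ]
        rwa [h6] at h5
      · right
        have h7 := IH Y (φ.symm u') hcatch
        have h6 : φ (φ.symm u') = u' := by simp
        rwa [h6] at h7

variable {h l : ℕ}

def mirror (h l : ℕ) : gridGraph h l ≃g gridGraph h l where
  toEquiv := Equiv.prodCongr (Equiv.refl (Fin h)) (Fin.revPerm)
  map_rel_iff' := by
    intro a b
    rw [grid_adj, grid_adj]
    simp only [Equiv.prodCongr_apply, Equiv.coe_refl, Prod.map_fst, Prod.map_snd, id_eq,
      Fin.revPerm_apply, Fin.val_rev]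
    have := a.2.isLt
    have := b.2.isLt
    omega

lemma barF_map_mirror {g g' : ℕ → ℕ}
    (hrel : ∀ r, r < h → g r < l ∧ g' r < l ∧ g' r = l - 1 - g r) :
    (barF h l (h+1) g).map
        (Equiv.sumCongr (mirror h l).toEquiv (Equiv.refl (Fin (h+1)))).toEmbedding
      = barF h l (h+1) g' := by
  ext x
  rw [Finset.mem_map, mem_barF]
  constructor
  · rintro ⟨y, hy, rfl⟩
    rcases mem_barF.1 hy with ⟨p, rfl, hp⟩
    refine ⟨(p.1, p.2.rev), rfl, ?_⟩
    simp only [Fin.val_rev]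
    have := hrel p.1 p.1.isLt
    omega
  · rintro ⟨p, rfl, hp⟩
    refine ⟨Sum.inl (p.1, p.2.rev), ?_, ?_⟩
    · rw [inl_mem_barF]
      simp only [Fin.val_rev]
      have := hrel p.1 p.1.isLt
      have := p.2.isLt
      omega
    · show Sum.inl ((mirror h l) (p.1, p.2.rev)) = Sum.inl p
      have : (mirror h l) (p.1, p.2.rev) = (p.1, p.2.rev.rev) := rfl
      rw [this, Fin.rev_rev]

end CWG

namespace CWG
variable {h l : ℕ}

lemma gf0 {m0 r : ℕ} : gf m0 0 0 r = m0 + r % 2 := by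
  unfold gf; split_ifs <;> omega

lemma gf10 {m r : ℕ} : gf m 1 0 r = if r % 2 = 1 then m else m + 1 := by
  unfold gf; split_ifs <;> omega

/-- cop positions during the build-up phase. -/
def XbF (h l t m0 : ℕ) : Finset ((Fin h × Fin l) ⊕ Fin (h+1)) :=
  ((Finset.univ.filter fun p : Fin h × Fin l =>
      (p.1 : ℕ) < t ∧ (p.2 : ℕ) = m0 + (p.1 : ℕ) % 2).image Sum.inl)
  ∪ ((Finset.univ.filter fun j : Fin (h+1) => t ≤ (j : ℕ)).image Sum.inr)

lemma mem_XbF {t m0 : ℕ} {x : (Fin h × Fin l) ⊕ Fin (h+1)} :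
    x ∈ XbF h l t m0 ↔
      (∃ p : Fin h × Fin l, x = Sum.inl p ∧ (p.1 : ℕ) < t ∧ (p.2 : ℕ) = m0 + (p.1 : ℕ) % 2)
      ∨ (∃ j : Fin (h+1), x = Sum.inr j ∧ t ≤ (j : ℕ)) := by
  simp only [XbF, Finset.mem_union, Finset.mem_image, Finset.mem_filter, Finset.mem_univ,
    true_and]
  constructor
  · rintro (⟨p, hp, rfl⟩ | ⟨j, hj, rfl⟩)
    · exact Or.inl ⟨p, rfl, hp⟩
    · exact Or.inr ⟨j, rfl, hj⟩
  · rintro (⟨p, rfl, hp⟩ | ⟨j, rfl, hj⟩)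
    · exact Or.inl ⟨p, hp, rfl⟩
    · exact Or.inr ⟨j, hj, rfl⟩

lemma XbF_zero {m0 : ℕ} : XbF h l 0 m0 = initPos (Fin h × Fin l) (h+1) := by
  ext x
  rw [mem_XbF]
  simp only [initPos, Finset.mem_image, Finset.mem_univ, true_and]
  constructor
  · rintro (⟨p, -, hp, -⟩ | ⟨j, rfl, -⟩)
    · omega
    · exact ⟨j, rfl⟩
  · rintro ⟨j, rfl⟩
    exact Or.inr ⟨j, rfl, Nat.zero_le _⟩

lemma XbF_last {m0 : ℕ} (hm : m0 + 2 ≤ l) :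
    XbF h l h m0 = insert (Sum.inr ⟨h, by omega⟩) (barF h l (h+1) (gf m0 0 0)) := by
  ext x
  rw [mem_XbF, Finset.mem_insert, mem_barF]
  constructor
  · rintro (⟨p, rfl, -, hp⟩ | ⟨j, rfl, hj⟩)
    · exact Or.inr ⟨p, rfl, by rw [gf0]; exact hp⟩
    · left
      congr 1
      have := j.isLt
      exact Fin.ext (show (j : ℕ) = h by omega)
  · rintro (rfl | ⟨p, rfl, hp⟩)
    · exact Or.inr ⟨⟨h, by omega⟩, rfl, le_refl _⟩
    · exact Or.inl ⟨p, rfl, p.1.isLt, by rw [gf0] at hp; exact hp⟩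

lemma XbF_step {t m0 : ℕ} (ht : t < h) (hm : m0 + 2 ≤ l) :
    XbF h l (t+1) m0 =
      insert (Sum.inl ((⟨t, ht⟩ : Fin h), (⟨m0 + t % 2, by omega⟩ : Fin l)))
        ((XbF h l t m0).erase (Sum.inr ⟨t, by omega⟩)) := by
  ext x
  rw [mem_XbF, Finset.mem_insert, Finset.mem_erase, mem_XbF]
  constructor
  · rintro (⟨p, rfl, hp1, hp2⟩ | ⟨j, rfl, hj⟩)
    · by_cases hpt : (p.1 : ℕ) = t
      · left
        congr 1
        exact cellext (by simpa using hpt) (by simp; omega)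
      · right
        refine ⟨by simp, Or.inl ⟨p, rfl, by omega, hp2⟩⟩
    · right
      refine ⟨?_, Or.inr ⟨j, rfl, by omega⟩⟩
      intro hc
      have : (j : ℕ) = t := by
        have := Sum.inr_injective hc
        exact congrArg Fin.val this
      omega
  · rintro (rfl | ⟨hne, ⟨p, rfl, hp1, hp2⟩ | ⟨j, rfl, hj⟩⟩)
    · exact Or.inl ⟨_, rfl, by simpa using Nat.lt_succ_self t, by simp⟩
    · exact Or.inl ⟨p, rfl, by omega, hp2⟩
    · refine Or.inr ⟨j, rfl, ?_⟩
      rcases Nat.lt_or_ge t (j : ℕ) with h' | h'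
      · omega
      · exfalso
        apply hne
        congr 1
        exact Fin.ext (show (j : ℕ) = t by omega)

lemma build (hh : 4 ≤ h) (hl : h + 4 ≤ l) :
    ∀ q t, t ≤ h → (XbF h l t ((l-2)/2)).card = h + 1 →
    (h - t) + (max (Wr h (l - 2 - (l-2)/2) 0) (Wr h ((l-2)/2) 1) + 1) ≤ q →
    ∀ v : Fin h × Fin l, Sum.inl v ∉ XbF h l t ((l-2)/2) →
    CopsCatch (gridGraph h l) (h+1) q (XbF h l t ((l-2)/2)) v := by
  intro q
  induction q with
  | zero => intro t _ _ hbud; omega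
  | succ q IH =>
    intro t ht hcard hbud v hvX
    set m0 := (l-2)/2 with hm0
    have hm0l : m0 + 3 ≤ l := by omega
    by_cases hth : t = h
    · -- barrier complete: hand over to the sweep
      rw [hth] at hcard hbud hvX ⊢
      rw [XbF_last (by omega)] at hvX ⊢
      have hvbar : (v.2 : ℕ) ≠ gf m0 0 0 v.1 := by
        intro hc
        exact hvX (Finset.mem_insert_of_mem (inl_mem_barF.2 hc))
      rcases Nat.lt_or_ge (gf m0 0 0 v.1) (v.2 : ℕ) with hside | hside
      · -- robber to the right
        exact sweep hh (q+1) m0 0 0 (by omega)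
          (Or.inr ⟨cnt_pos (by omega) (by omega), hm0l⟩)
          (by
            have := le_max_left (Wr h (l - 2 - m0) 0) (Wr h m0 1)
            omega)
          (Sum.inr ⟨h, by omega⟩) (by rintro p ⟨⟩) v hside
      · -- robber to the left: use the mirror symmetry
        have hside' : (v.2 : ℕ) < gf m0 0 0 v.1 := by omega
        set mL := l - 2 - m0 with hmL
        have hL3 : mL + 3 ≤ l := by omega
        have hsw := sweep hh (q+1) mL 1 0 (by omega)
          (Or.inr ⟨cnt_pos (by omega) (by omega), hL3⟩)
          (by
            have h1 : l - 2 - mL = m0 := by omega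
            rw [h1]
            have := le_max_right (Wr h (l - 2 - m0) 0) (Wr h m0 1)
            omega)
          (Sum.inr ⟨h, by omega⟩) (by rintro p ⟨⟩)
          ((mirror h l) v)
          (by
            show gf mL 1 0 (((mirror h l) v).1 : ℕ) < ((((mirror h l) v).2 : Fin l) : ℕ)
            have h1 : ((mirror h l) v).1 = v.1 := rfl
            have h2 : (((mirror h l) v).2 : ℕ) = l - ((v.2 : ℕ) + 1) := Fin.val_rev v.2
            rw [h1, h2, gf10]
            rw [gf0] at hside'
            have := v.2.isLt
            split_ifs with hpar <;> omega)
        have hmap := catch_map (mirror h l) (q+1) _ _ hsw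
        rw [Finset.map_insert] at hmap
        have hinr : (Equiv.sumCongr (mirror h l).toEquiv (Equiv.refl (Fin (h+1)))).toEmbedding
            (Sum.inr ⟨h, by omega⟩) = Sum.inr ⟨h, by omega⟩ := rfl
        rw [hinr] at hmap
        rw [barF_map_mirror (g' := gf m0 0 0) ?hrel] at hmap
        case hrel =>
          intro r hr
          rw [gf10, gf0]
          have c1 : gf mL 1 0 r ≤ mL + 1 := gf_le0 (by omega)
          rw [gf10] at c1
          split_ifs <;> omega
        have hvv : (mirror h l) ((mirror h l) v) = v := by
          show (v.1, v.2.rev.rev) = v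
          rw [Fin.rev_rev]
        rwa [hvv] at hmap
    · -- continue building the barrier
      have hth' : t < h := by omega
      set a : (Fin h × Fin l) ⊕ Fin (h+1) := Sum.inr ⟨t, by omega⟩ with ha
      set bc : Fin h × Fin l := ((⟨t, hth'⟩ : Fin h), (⟨m0 + t % 2, by omega⟩ : Fin l)) with hbc
      have haX : a ∈ XbF h l t m0 := mem_XbF.2 (Or.inr ⟨⟨t, by omega⟩, rfl, le_refl _⟩)
      have hbX : Sum.inl bc ∉ XbF h l t m0 := by
        rw [mem_XbF]
        rintro (⟨p, hp, hp1, -⟩ | ⟨j, hj, -⟩)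
        · have := Sum.inl_injective hp
          have : (bc.1 : ℕ) = (p.1 : ℕ) := by rw [this]
          simp only [hbc] at this
          omega
        · cases hj
      obtain ⟨hcY, hXY⟩ := move_spec haX hbX
      set Y := insert (Sum.inl bc) ((XbF h l t m0).erase a) with hY
      have hYeq : XbF h l (t+1) m0 = Y := XbF_step hth' (by omega)
      rw [CopsCatch]
      refine ⟨Y, by rw [hcY, hcard], ?_, ?_⟩
      · rw [hXY, Finset.card_erase_of_mem haX, hcard]
      · intro u hmv
        by_cases huY : Sum.inl u ∈ Y
        · exact Or.inl huY
        · right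
          rw [← hYeq]
          apply IH (t+1) (by omega) (by rw [hYeq, hcY, hcard]) (by omega)
          rw [hYeq]
          exact huY

end CWG

open CWG

/-- For `3 < h < ℓ−3` and `q ≥ ℓh/4 + h + 1`, Cops wins the `q`-round
`(h+1)`-cops-and-robber game on the `h × ℓ` grid. -/
theorem cops_win_grid (h l q : ℕ) (h1 : 3 < h) (h2 : h < l - 3)
    (hq : l * h + 4 * h + 4 ≤ 4 * q) :
    CopsWinGame (gridGraph h l) (h + 1) q := by
  have hh : 4 ≤ h := by omega
  have hl : h + 4 ≤ l := by omega
  intro v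
  rw [show initPos (Fin h × Fin l) (h+1) = XbF h l 0 ((l-2)/2) from XbF_zero.symm]
  apply build hh hl q 0 (by omega) ?card ?bud v ?vnotin
  case card =>
    rw [XbF_zero]
    unfold initPos
    rw [Finset.card_image_of_injective _ Sum.inr_injective, Finset.card_univ, Fintype.card_fin]
  case vnotin =>
    rw [XbF_zero]
    unfold initPos
    simp
  case bud =>
    set NR := l - 2 - (l-2)/2 with hNR
    set NL := (l-2)/2 with hNL
    have b1 := Wr_bound (h := h) (by omega) NR 0 (by omega)
    have b2 := Wr_bound (h := h) (by omega) NL 1 (by omega)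
    have m1 : 2 * NR ≤ l - 1 := by omega
    have m2 : 2 * NL ≤ l - 1 := by omega
    have c1 : (2 * NR) * h ≤ (l-1) * h := Nat.mul_le_mul_right h m1
    have c2 : (2 * NL) * h ≤ (l-1) * h := Nat.mul_le_mul_right h m2
    have d1 : 4 * Wr h NR 0 ≤ (l-1) * h + 2 := by
      calc 4 * Wr h NR 0 = 2 * (2 * Wr h NR 0) := by ring
      _ ≤ 2 * (NR * h + 1) := Nat.mul_le_mul_left 2 b1
      _ = (2 * NR) * h + 2 := by ring
      _ ≤ (l-1) * h + 2 := Nat.add_le_add_right c1 2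
    have d2 : 4 * Wr h NL 1 ≤ (l-1) * h + 2 := by
      calc 4 * Wr h NL 1 = 2 * (2 * Wr h NL 1) := by ring
      _ ≤ 2 * (NL * h + 1) := Nat.mul_le_mul_left 2 b2
      _ = (2 * NL) * h + 2 := by ring
      _ ≤ (l-1) * h + 2 := Nat.add_le_add_right c2 2
    have e1 : (l-1) * h + h = l * h := by
      have hl1 : l - 1 + 1 = l := by omega
      calc (l-1) * h + h = (l - 1 + 1) * h := by ring
      _ = l * h := by rw [hl1]
    have hmax : 4 * max (Wr h NR 0) (Wr h NL 1) ≤ (l-1) * h + 2 := by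
      rcases max_cases (Wr h NR 0) (Wr h NL 1) with ⟨hmx, -⟩ | ⟨hmx, -⟩ <;> rw [hmx]
      · exact d1
      · exact d2
    have : h - 0 = h := rfl
    rw [this]
    linarith
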